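/- (QFTr Plancherel, quaternion-valued) For f, g ∈ L²(ℝ²;ℍ) with suitable integrability, the quaternion-valued inner product (f,g) = ∫ f(x)·g̃(x) d²x satisfies (f,g) = (1/(2π)²)·(F_r f, F_r g), where F_r f(u,v) = ∫ f(x,y)·e^{-i xu}·e^{-j yv} dx dy is the right-sided QFT. -/

import Mathlib

open Quaternion MeasureTheory Real

noncomputable def qi : ℍ[ℝ] := ⟨0,1,0,0⟩
noncomputable def qj : ℍ[ℝ] := ⟨0,0,1,0⟩
noncomputable def qk : ℍ[ℝ] := ⟨0,0,0,1⟩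
/-- exp(θ·v) = cos θ + v sin θ for a quaternion unit v with v² = -1. -/
noncomputable def qexp (v : ℍ[ℝ]) (θ : ℝ) : ℍ[ℝ] := (Real.cos θ : ℍ[ℝ]) + Real.sin θ • v

/-- The two-sided quaternion Fourier transform. -/
noncomputable def QFT (f : ℝ × ℝ → ℍ[ℝ]) (u v : ℝ) : ℍ[ℝ] :=
  ∫ p : ℝ × ℝ, qexp qi (-(p.1 * u)) * f p * qexp qj (-(p.2 * v))

/-- The right-sided quaternion Fourier transform. -/
noncomputable def QFTr (f : ℝ × ℝ → ℍ[ℝ]) (u v : ℝ) : ℍ[ℝ] :=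
  ∫ p : ℝ × ℝ, f p * qexp qi (-(p.1 * u)) * qexp qj (-(p.2 * v))

lemma continuous_qexp (v : ℍ[ℝ]) : Continuous (qexp v) :=
  (Quaternion.continuous_coe.comp Real.continuous_cos).add
    (Real.continuous_sin.smul continuous_const)

lemma qexp_qi_mk (θ : ℝ) : qexp qi θ = ⟨Real.cos θ, Real.sin θ, 0, 0⟩ := by
  ext <;> simp [qexp, qi] <;> (show Real.sin θ * _ = _; simp)

lemma qexp_qj_mk (θ : ℝ) : qexp qj θ = ⟨Real.cos θ, 0, Real.sin θ, 0⟩ := by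
  ext <;> simp [qexp, qj] <;> (show Real.sin θ * _ = _; simp)

lemma norm_qexp_qi (θ : ℝ) : ‖qexp qi θ‖ = 1 := by
  have h : normSq (qexp qi θ) = 1 := by
    rw [Quaternion.normSq_def', qexp_qi_mk]
    simp [Real.sin_sq_add_cos_sq, Real.cos_sq_add_sin_sq]
  have := Quaternion.normSq_eq_norm_mul_self (qexp qi θ)
  nlinarith [norm_nonneg (qexp qi θ)]

lemma norm_qexp_qj (θ : ℝ) : ‖qexp qj θ‖ = 1 := by
  have h : normSq (qexp qj θ) = 1 := by
    rw [Quaternion.normSq_def', qexp_qj_mk]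
    simp [Real.sin_sq_add_cos_sq, Real.cos_sq_add_sin_sq]
  have := Quaternion.normSq_eq_norm_mul_self (qexp qj θ)
  nlinarith [norm_nonneg (qexp qj θ)]

lemma star_qexp_qi (θ : ℝ) : star (qexp qi θ) = qexp qi (-θ) := by
  rw [qexp_qi_mk, qexp_qi_mk, Real.cos_neg, Real.sin_neg]
  exact (by ext <;> simp : star (⟨Real.cos θ, Real.sin θ, 0, 0⟩ : ℍ[ℝ]) = ⟨Real.cos θ, -Real.sin θ, 0, 0⟩)

lemma star_qexp_qj (θ : ℝ) : star (qexp qj θ) = qexp qj (-θ) := by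
  rw [qexp_qj_mk, qexp_qj_mk, Real.cos_neg, Real.sin_neg]
  exact (by ext <;> simp : star (⟨Real.cos θ, 0, Real.sin θ, 0⟩ : ℍ[ℝ]) = ⟨Real.cos θ, 0, -Real.sin θ, 0⟩)

instance : StarModule ℝ ℍ[ℝ] := ⟨fun r a => Quaternion.star_smul r a⟩

instance : ContinuousStar ℍ[ℝ] :=
  ⟨(Isometry.continuous (fun a b => by
    rw [edist_dist, edist_dist, dist_eq_norm, dist_eq_norm, ← star_sub, Quaternion.norm_star]))⟩

lemma int_mul_right (s : ℍ[ℝ]) (φ : ℝ × ℝ → ℍ[ℝ]) (hφ : Integrable φ) :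
    (∫ w, φ w) * s = ∫ w, φ w * s := by
  simpa using (((ContinuousLinearMap.mul ℝ ℍ[ℝ]).flip s).integral_comp_comm hφ).symm

lemma int_mul_left (a : ℍ[ℝ]) (φ : ℝ × ℝ → ℍ[ℝ]) (hφ : Integrable φ) :
    a * (∫ w, φ w) = ∫ w, a * φ w := by
  simpa using ((ContinuousLinearMap.mul ℝ ℍ[ℝ] a).integral_comp_comm hφ).symm

lemma int_star (φ : ℝ × ℝ → ℍ[ℝ]) : star (∫ p, φ p) = ∫ p, star (φ p) := by
  simpa using ((starL' ℝ : ℍ[ℝ] ≃L[ℝ] ℍ[ℝ]).integral_comp_comm φ).symm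

example (g : ℝ × ℝ → ℍ[ℝ]) (w : ℝ × ℝ) (hg : Integrable g) :
    Integrable (fun p : ℝ × ℝ =>
      qexp qj (w.2 * p.2) * qexp qi (w.1 * p.1) * star (g p)) := by
  apply (hg.norm).mono'
  · exact ((((continuous_qexp qj).comp (continuous_const.mul continuous_snd)).aestronglyMeasurable).mul
      (((continuous_qexp qi).comp (continuous_const.mul continuous_fst)).aestronglyMeasurable)).mul
      (continuous_star.comp_aestronglyMeasurable hg.aestronglyMeasurable)
  · filter_upwards with p
    rw [norm_mul, norm_mul, norm_qexp_qj, norm_qexp_qi, Quaternion.norm_star]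
    simp

theorem QFTr_Plancherel (f g : ℝ × ℝ → ℍ[ℝ])
    (hf : Integrable f) (hg : Integrable g)
    (hFf : Integrable (fun w : ℝ × ℝ => QFTr f w.1 w.2))
    (hFg : Integrable (fun w : ℝ × ℝ => QFTr g w.1 w.2))
    (hinv : ∀ x y : ℝ, f (x, y) =
      ((2 * π) ^ 2)⁻¹ • ∫ w : ℝ × ℝ, QFTr f w.1 w.2 * qexp qj (w.2 * y) * qexp qi (w.1 * x)) :
    (∫ p : ℝ × ℝ, f p * star (g p)) =
      ((2 * π) ^ 2)⁻¹ • ∫ w : ℝ × ℝ, QFTr f w.1 w.2 * star (QFTr g w.1 w.2) := by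
  have hgm := hg.aestronglyMeasurable
  have hFm := hFf.aestronglyMeasurable
  have h1 : ∀ p : ℝ × ℝ, Integrable (fun w : ℝ × ℝ =>
      QFTr f w.1 w.2 * qexp qj (w.2 * p.2) * qexp qi (w.1 * p.1)) := by
    intro p
    apply (hFf.norm).mono'
    · exact (hFm.mul (((continuous_qexp qj).comp
        (continuous_snd.mul continuous_const)).aestronglyMeasurable)).mul
        (((continuous_qexp qi).comp (continuous_fst.mul continuous_const)).aestronglyMeasurable)
    · filter_upwards with w
      rw [norm_mul, norm_mul, norm_qexp_qj, norm_qexp_qi, mul_one, mul_one]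
  have h2 : ∀ w : ℝ × ℝ, Integrable (fun p : ℝ × ℝ =>
      qexp qj (w.2 * p.2) * qexp qi (w.1 * p.1) * star (g p)) := by
    intro w
    apply (hg.norm).mono'
    · exact ((((continuous_qexp qj).comp
        (continuous_const.mul continuous_snd)).aestronglyMeasurable).mul
        (((continuous_qexp qi).comp (continuous_const.mul continuous_fst)).aestronglyMeasurable)).mul
        (continuous_star.comp_aestronglyMeasurable hgm)
    · filter_upwards with p
      rw [norm_mul, norm_mul, norm_qexp_qj, norm_qexp_qi, Quaternion.norm_star]
      simp
  have hH : Integrable (Function.uncurry (fun (p w : ℝ × ℝ) =>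
      QFTr f w.1 w.2 * qexp qj (w.2 * p.2) * qexp qi (w.1 * p.1) * star (g p)))
      (volume.prod volume) := by
    apply Integrable.mono' ((hg.norm).mul_prod (hFf.norm))
    · exact ((hFm.comp_snd.mul (((continuous_qexp qj).comp
        ((continuous_snd.comp continuous_snd).mul
          (continuous_snd.comp continuous_fst))).aestronglyMeasurable)).mul
        (((continuous_qexp qi).comp ((continuous_fst.comp continuous_snd).mul
          (continuous_fst.comp continuous_fst))).aestronglyMeasurable)).mul
        (continuous_star.comp_aestronglyMeasurable hgm.comp_fst)
    · filter_upwards with z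
      rw [Function.uncurry, norm_mul, norm_mul, norm_mul, norm_qexp_qj, norm_qexp_qi,
        Quaternion.norm_star, mul_one, mul_one, mul_comm]
  calc (∫ p : ℝ × ℝ, f p * star (g p))
      = ∫ p : ℝ × ℝ, ((2 * π) ^ 2)⁻¹ •
          ((∫ w : ℝ × ℝ, QFTr f w.1 w.2 * qexp qj (w.2 * p.2) * qexp qi (w.1 * p.1))
            * star (g p)) := by
        refine integral_congr_ae (Filter.Eventually.of_forall fun p => ?_)
        dsimp only
        rw [← smul_mul_assoc, ← hinv p.1 p.2]
    _ = ((2 * π) ^ 2)⁻¹ • ∫ p : ℝ × ℝ, ∫ w : ℝ × ℝ,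
          QFTr f w.1 w.2 * qexp qj (w.2 * p.2) * qexp qi (w.1 * p.1) * star (g p) := by
        rw [integral_smul]
        congr 1
        refine integral_congr_ae (Filter.Eventually.of_forall fun p => ?_)
        dsimp only
        rw [int_mul_right _ _ (h1 p)]
    _ = ((2 * π) ^ 2)⁻¹ • ∫ w : ℝ × ℝ, ∫ p : ℝ × ℝ,
          QFTr f w.1 w.2 * qexp qj (w.2 * p.2) * qexp qi (w.1 * p.1) * star (g p) := by
        congr 1
        exact integral_integral_swap hH
    _ = ((2 * π) ^ 2)⁻¹ • ∫ w : ℝ × ℝ, QFTr f w.1 w.2 *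
          ∫ p : ℝ × ℝ, qexp qj (w.2 * p.2) * qexp qi (w.1 * p.1) * star (g p) := by
        congr 1
        refine integral_congr_ae (Filter.Eventually.of_forall fun w => ?_)
        dsimp only
        rw [int_mul_left _ _ (h2 w)]
        simp only [mul_assoc]
    _ = ((2 * π) ^ 2)⁻¹ • ∫ w : ℝ × ℝ, QFTr f w.1 w.2 * star (QFTr g w.1 w.2) := by
        congr 1
        refine integral_congr_ae (Filter.Eventually.of_forall fun w => ?_)
        dsimp only
        congr 1
        rw [show QFTr g w.1 w.2 = ∫ p : ℝ × ℝ, g p * qexp qi (-(p.1 * w.1)) * qexp qj (-(p.2 * w.2)) from rfl, int_star]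
        refine integral_congr_ae (Filter.Eventually.of_forall fun p => ?_)
        dsimp only
        rw [star_mul, star_mul, star_qexp_qj, star_qexp_qi, neg_neg, neg_neg,
          mul_comm p.2 w.2, mul_comm p.1 w.1, mul_assoc]
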